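/- For every integer n ≥ 4 and every i ∈ {1,…,n}, the subgraph CW_n^i of CW_n is isomorphic (as a graph) to the bubble-sort star graph BS_{n−1}. -/

import Mathlib

/-- The generating set S₂ = {(1 j) : 2 ≤ j ≤ n} ∪ {(j j+1) : 2 ≤ j ≤ n−1} ∪ {(2 n)},
where elements of {1,…,n} are encoded zero-indexed as `Fin n` (value k represents k+1). -/
def cwGen (n : ℕ) : Set (Equiv.Perm (Fin n)) :=
  {s | ∃ i j : Fin n, s = Equiv.swap i j ∧
      (((i : ℕ) = 0 ∧ j ≠ i) ∨
       ((j : ℕ) = (i : ℕ) + 1 ∧ 1 ≤ (i : ℕ)) ∨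
       ((i : ℕ) = 1 ∧ (j : ℕ) = n - 1))}

/-- The Cayley graph CW_n = Cay(S_n, S₂). -/
def CW (n : ℕ) : SimpleGraph (Equiv.Perm (Fin n)) where
  Adj g h := g ≠ h ∧ g⁻¹ * h ∈ cwGen n
  symm := by
    constructor
    rintro g h ⟨hne, i, j, hs, hc⟩
    refine ⟨hne.symm, i, j, ?_, hc⟩
    have hinv : h⁻¹ * g = (g⁻¹ * h)⁻¹ := by group
    rw [hinv, hs, Equiv.swap_inv]
  loopless := ⟨fun g h => h.1 rfl⟩

/-- The generating set S₁ = {(1 j) : 2 ≤ j ≤ n} ∪ {(j j+1) : 2 ≤ j ≤ n−1},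
where elements of {1,…,n} are encoded zero-indexed as `Fin n` (value k represents k+1). -/
def bsGen (n : ℕ) : Set (Equiv.Perm (Fin n)) :=
  {s | ∃ i j : Fin n, s = Equiv.swap i j ∧
      (((i : ℕ) = 0 ∧ j ≠ i) ∨
       ((j : ℕ) = (i : ℕ) + 1 ∧ 1 ≤ (i : ℕ)))}

/-- The bubble-sort star graph BS_n = Cay(S_n, S₁). -/
def BS (n : ℕ) : SimpleGraph (Equiv.Perm (Fin n)) where
  Adj g h := g ≠ h ∧ g⁻¹ * h ∈ bsGen n
  symm := by
    constructor
    rintro g h ⟨hne, i, j, hs, hc⟩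
    refine ⟨hne.symm, i, j, ?_, hc⟩
    have hinv : h⁻¹ * g = (g⁻¹ * h)⁻¹ := by group
    rw [hinv, hs, Equiv.swap_inv]
  loopless := ⟨fun g h => h.1 rfl⟩

open Equiv Equiv.Perm Fin

noncomputable def myLift (m : ℕ) : Perm (Fin m) →* Perm (Fin (m+1)) :=
  viaEmbeddingHom castSuccEmb

lemma myLift_castSucc {m : ℕ} (π : Perm (Fin m)) (a : Fin m) :
    myLift m π a.castSucc = (π a).castSucc :=
  viaEmbedding_apply π castSuccEmb a

lemma myLift_last {m : ℕ} (π : Perm (Fin m)) : myLift m π (last m) = last m := by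
  refine viaEmbedding_apply_of_notMem π castSuccEmb _ ?_
  rintro ⟨a, ha⟩
  exact (castSucc_lt_last a).ne ha

lemma myLift_inj {m : ℕ} : Function.Injective (myLift m) :=
  viaEmbeddingHom_injective castSuccEmb

lemma myLift_swap {m : ℕ} (a b : Fin m) :
    myLift m (Equiv.swap a b) = Equiv.swap a.castSucc b.castSucc := by
  ext k
  refine Fin.lastCases ?_ (fun c => ?_) k
  · rw [myLift_last, Equiv.swap_apply_of_ne_of_ne (castSucc_lt_last a).ne'
      (castSucc_lt_last b).ne']
  · rw [myLift_castSucc]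
    rcases eq_or_ne c a with rfl | hca
    · simp [Equiv.swap_apply_left]
    · rcases eq_or_ne c b with rfl | hcb
      · simp [Equiv.swap_apply_right]
      · rw [Equiv.swap_apply_of_ne_of_ne hca hcb,
          Equiv.swap_apply_of_ne_of_ne ((castSucc_injective m).ne_iff.2 hca)
            ((castSucc_injective m).ne_iff.2 hcb)]

lemma exists_myLift {m : ℕ} (δ : Perm (Fin (m+1))) (hδ : δ (last m) = last m) :
    ∃ π : Perm (Fin m), myLift m π = δ := by
  have hne : ∀ a : Fin m, δ a.castSucc ≠ last m := fun a h => by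
    have := δ.injective (h.trans hδ.symm)
    exact (castSucc_lt_last a).ne this
  have hne' : ∀ a : Fin m, δ⁻¹ a.castSucc ≠ last m := fun a h => by
    have : a.castSucc = δ (last m) := by
      rw [← h]; simp
    exact (castSucc_lt_last a).ne (this.trans hδ)
  refine ⟨⟨fun a => (δ a.castSucc).castPred (hne a),
      fun a => (δ⁻¹ a.castSucc).castPred (hne' a), fun a => ?_, fun a => ?_⟩, ?_⟩
  · apply castSucc_injective
    simp only [castSucc_castPred]
    simp
  · apply castSucc_injective
    simp only [castSucc_castPred]
    simp
  · ext k
    refine Fin.lastCases ?_ (fun c => ?_) k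
    · rw [myLift_last, hδ]
    · rw [myLift_castSucc]
      exact congrArg Fin.val (castSucc_castPred _ (hne c))

lemma myLift_mem_iff {m : ℕ} (hm : 3 ≤ m) (τ : Perm (Fin m)) :
    myLift m τ ∈ cwGen (m+1) ↔ τ ∈ bsGen m := by
  constructor
  · rintro ⟨a, b, hs, hc⟩
    have hab : a ≠ b := by
      rintro rfl
      rcases hc with ⟨_, h⟩ | ⟨h, _⟩ | ⟨h1, h2⟩
      · exact h rfl
      · omega
      · omega
    have hfix : Equiv.swap a b (last m) = last m := by rw [← hs, myLift_last]
    have hal : a ≠ last m := by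
      rintro rfl
      rw [Equiv.swap_apply_left] at hfix
      exact hab hfix.symm
    have hbl : b ≠ last m := by
      rintro rfl
      rw [Equiv.swap_apply_right] at hfix
      exact hab hfix
    have ha : (a : ℕ) < m := lt_of_le_of_ne (Nat.lt_succ_iff.1 a.isLt)
      (fun h => hal (Fin.ext h))
    have hb : (b : ℕ) < m := lt_of_le_of_ne (Nat.lt_succ_iff.1 b.isLt)
      (fun h => hbl (Fin.ext h))
    refine ⟨⟨a, ha⟩, ⟨b, hb⟩, ?_, ?_⟩
    · apply myLift_inj
      rw [myLift_swap, hs]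
      congr 1
    · rcases hc with ⟨h1, h2⟩ | ⟨h1, h2⟩ | ⟨h1, h2⟩
      · exact Or.inl ⟨h1, fun h => h2 (by
          apply Fin.ext
          simpa using congrArg Fin.val h)⟩
      · exact Or.inr ⟨h1, h2⟩
      · simp only [Nat.add_sub_cancel] at h2
        omega
  · rintro ⟨a, b, rfl, hc⟩
    rw [myLift_swap]
    refine ⟨a.castSucc, b.castSucc, rfl, ?_⟩
    rcases hc with ⟨h1, h2⟩ | ⟨h1, h2⟩
    · exact Or.inl ⟨h1, fun h => h2 (castSucc_injective m h)⟩
    · exact Or.inr (Or.inl ⟨h1, h2⟩)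

lemma key (m : ℕ) (hm : 3 ≤ m) (i : Fin (m+1)) :
    Nonempty (((CW (m+1)).induce {σ : Perm (Fin (m+1)) | σ (last m) = i}) ≃g BS m) := by
  set ρ : Perm (Fin (m+1)) := Equiv.swap (last m) i with hρ
  have hρlast : ρ (last m) = i := Equiv.swap_apply_left _ _
  set F : Perm (Fin m) → {σ : Perm (Fin (m+1)) | σ (last m) = i} :=
    fun π => ⟨ρ * myLift m π, by
      show (ρ * myLift m π) (last m) = i
      rw [Perm.mul_apply, myLift_last, hρlast]⟩ with hF
  have hFbij : Function.Bijective F := by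
    constructor
    · intro π π' h
      have : ρ * myLift m π = ρ * myLift m π' := congrArg Subtype.val h
      exact myLift_inj (mul_left_cancel this)
    · rintro ⟨σ, hσ⟩
      have hfix : (ρ⁻¹ * σ) (last m) = last m := by
        rw [Perm.mul_apply, hσ, hρ, Equiv.swap_inv, Equiv.swap_apply_right]
      obtain ⟨π, hπ⟩ := exists_myLift (ρ⁻¹ * σ) hfix
      refine ⟨π, Subtype.ext ?_⟩
      show ρ * myLift m π = σ
      rw [hπ]; group
  have hmul : ∀ π π' : Perm (Fin m),
      (ρ * myLift m π)⁻¹ * (ρ * myLift m π') = myLift m (π⁻¹ * π') := by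
    intro π π'
    rw [map_mul, map_inv]; group
  refine ⟨⟨Equiv.symm (Equiv.ofBijective F hFbij), ?_⟩⟩
  intro u v
  obtain ⟨π, rfl⟩ := hFbij.surjective u
  obtain ⟨π', rfl⟩ := hFbij.surjective v
  rw [Equiv.ofBijective_symm_apply_apply, Equiv.ofBijective_symm_apply_apply]
  show ((π ≠ π') ∧ π⁻¹ * π' ∈ bsGen m) ↔
    ((ρ * myLift m π ≠ ρ * myLift m π') ∧
      (ρ * myLift m π)⁻¹ * (ρ * myLift m π') ∈ cwGen (m+1))
  rw [hmul, myLift_mem_iff hm]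
  constructor
  · rintro ⟨h1, h2⟩
    exact ⟨fun h => h1 (myLift_inj (mul_left_cancel h)), h2⟩
  · rintro ⟨h1, h2⟩
    exact ⟨fun h => h1 (by rw [h]), h2⟩

/-- For n ≥ 4 and any index i, the copy CW_n^i (the subgraph of CW_n induced by
{σ : σ(n) = i}) is isomorphic to the bubble-sort star graph BS_{n−1}. -/
theorem stmt15 (n : ℕ) (hn : 4 ≤ n) (i : Fin n) :
    Nonempty (((CW n).induce {σ : Equiv.Perm (Fin n) | σ ⟨n - 1, by omega⟩ = i}) ≃g
      BS (n - 1)) := by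
  obtain ⟨m, rfl⟩ : ∃ m, n = m + 1 := ⟨n - 1, by omega⟩
  exact key m (by omega) i
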